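/- Let μ > 0, p > 1 and a ∈ ℝ. Let f : ℝ → ℝ be continuously differentiable on [a,∞) and assume that t ↦ |f'(t)|^p·e^{μt} is integrable on [a,∞). Then f(t) converges to a finite limit c as t → ∞, and moreover |f(t) − c|^p·e^{μt} → 0 as t → ∞. -/

import Mathlib

open Set Real Filter MeasureTheory

theorem stmt_4
    (μ p a : ℝ) (hμ : 0 < μ) (hp : 1 < p)
    (f f' : ℝ → ℝ)
    (hderiv : ∀ t ∈ Ici a, HasDerivWithinAt f (f' t) (Ici a) t)
    (hcont : ContinuousOn f' (Ici a))
    (hint : IntegrableOn (fun t => |f' t| ^ p * Real.exp (μ * t)) (Ici a)) :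
    ∃ c : ℝ, Tendsto f atTop (nhds c) ∧
      Tendsto (fun t => |f t - c| ^ p * Real.exp (μ * t)) atTop (nhds 0) := by
  have hp0 : (0:ℝ) < p := lt_trans one_pos hp
  set q : ℝ := p / (p - 1) with hqdef
  have hpq : p.HolderConjugate q := Real.HolderConjugate.conjExponent hp
  have hq0 : 0 < q := hpq.symm.pos
  set b : ℝ := μ / p * q with hbdef
  have hb : 0 < b := mul_pos (div_pos hμ hp0) hq0
  -- measurability of f' on tails
  have hmeas : ∀ t, a ≤ t → AEStronglyMeasurable f' (volume.restrict (Ici t)) := fun t ht =>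
    ((hcont.mono (Ici_subset_Ici.mpr ht)).aestronglyMeasurable measurableSet_Ici)
  set G : ℝ → ℝ := fun s => |f' s| * Real.exp (μ / p * s) with hGdef
  set H : ℝ → ℝ := fun s => Real.exp (-(μ / p) * s) with hHdef
  have hGnn : ∀ s, 0 ≤ G s := fun s => mul_nonneg (abs_nonneg _) (Real.exp_pos _).le
  have hHnn : ∀ s, 0 ≤ H s := fun s => (Real.exp_pos _).le
  have hGp : ∀ s, G s ^ p = |f' s| ^ p * Real.exp (μ * s) := by
    intro s
    rw [hGdef, Real.mul_rpow (abs_nonneg _) (Real.exp_pos _).le, ← Real.exp_mul]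
    congr 2
    field_simp
  have hHq : ∀ s, H s ^ q = Real.exp (-b * s) := by
    intro s
    rw [hHdef, ← Real.exp_mul]
    congr 1
    rw [hbdef]; ring
  have hGH : ∀ s, G s * H s = |f' s| := by
    intro s
    have h0 : μ / p * s + -(μ / p) * s = 0 := by ring
    rw [hGdef, hHdef, mul_assoc, ← Real.exp_add, h0, Real.exp_zero, mul_one]
  -- integrability of G^p on tails
  have hGpint : ∀ t, a ≤ t → IntegrableOn (fun s => G s ^ p) (Ici t) := by
    intro t ht
    have h := hint.mono_set (Ici_subset_Ici.mpr ht)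
    simpa only [hGp] using h
  have hHqint : ∀ t : ℝ, IntegrableOn (fun s => H s ^ q) (Ici t) := by
    intro t
    rw [integrableOn_Ici_iff_integrableOn_Ioi]
    simpa only [hHq] using exp_neg_integrableOn_Ioi t hb
  have hpne : ENNReal.ofReal p ≠ 0 := by
    simp [ENNReal.ofReal_eq_zero, not_le, hp0]
  have hqne : ENNReal.ofReal q ≠ 0 := by
    simp [ENNReal.ofReal_eq_zero, not_le, hq0]
  have habsmeas : ∀ t, a ≤ t →
      AEStronglyMeasurable (fun s => |f' s|) (volume.restrict (Ici t)) := by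
    intro t ht
    simpa [Real.norm_eq_abs] using (hmeas t ht).norm
  have hGmeas : ∀ t, a ≤ t → AEStronglyMeasurable G (volume.restrict (Ici t)) := by
    intro t ht
    exact (habsmeas t ht).mul
      ((Real.continuous_exp.comp (continuous_const.mul continuous_id)).aestronglyMeasurable)
  have hHmeas : ∀ t : ℝ, AEStronglyMeasurable H (volume.restrict (Ici t)) :=
    fun t => (Real.continuous_exp.comp (continuous_const.mul continuous_id)).aestronglyMeasurable
  have hGmem : ∀ t, a ≤ t → MemLp G (ENNReal.ofReal p) (volume.restrict (Ici t)) := by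
    intro t ht
    rw [← memLp_norm_rpow_iff (hGmeas t ht) hpne ENNReal.ofReal_ne_top,
      ENNReal.div_self hpne ENNReal.ofReal_ne_top, ENNReal.toReal_ofReal hp0.le,
      memLp_one_iff_integrable]
    refine (hGpint t ht).congr ?_
    exact ae_of_all _ fun s => by simp only [Real.norm_eq_abs, abs_of_nonneg (hGnn s)]
  have hHmem : ∀ t : ℝ, MemLp H (ENNReal.ofReal q) (volume.restrict (Ici t)) := by
    intro t
    rw [← memLp_norm_rpow_iff (hHmeas t) hqne ENNReal.ofReal_ne_top,
      ENNReal.div_self hqne ENNReal.ofReal_ne_top, ENNReal.toReal_ofReal hq0.le,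
      memLp_one_iff_integrable]
    refine (hHqint t).congr ?_
    exact ae_of_all _ fun s => by simp only [Real.norm_eq_abs, abs_of_nonneg (hHnn s)]
  -- |f'| is integrable on [a, ∞)
  have habsint : IntegrableOn (fun s => |f' s|) (Ici a) := by
    have hmem : MemLp (G • H) 1 (volume.restrict (Ici a)) :=
      (hHmem a).smul (hGmem a le_rfl)
        (hpqr := hpq.ennrealOfReal)
    have h := memLp_one_iff_integrable.mp hmem
    refine h.congr (ae_of_all _ fun s => ?_)
    simp only [Pi.smul_apply', Pi.smul_apply, smul_eq_mul]
    exact hGH s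
  have hf'int : IntegrableOn f' (Ici a) := by
    exact (integrable_norm_iff (hmeas a le_rfl)).mp
      (habsint.congr (ae_of_all _ fun s => (Real.norm_eq_abs (f' s)).symm))
  -- continuity of f on [a, ∞)
  have hfc : ContinuousOn f (Ici a) := fun x hx => (hderiv x hx).continuousWithinAt
  -- FTC on finite intervals
  have hFTC : ∀ t u : ℝ, a ≤ t → t ≤ u → ∫ s in t..u, f' s = f u - f t := by
    intro t u hat htu
    refine intervalIntegral.integral_eq_sub_of_hasDerivAt_of_le htu
      (hfc.mono (fun x hx => le_trans hat hx.1)) (fun x hx => ?_) ?_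
    · exact (hderiv x (le_trans hat (le_of_lt hx.1))).hasDerivAt
        (Ici_mem_nhds (lt_of_le_of_lt hat hx.1))
    · exact (hcont.mono (fun x hx => le_trans hat hx.1)).intervalIntegrable_of_Icc htu
  set c : ℝ := f a + ∫ s in Ioi a, f' s with hcdef
  -- f tends to c
  have hfc' : Tendsto f atTop (nhds c) := by
    have h1 : Tendsto (fun u => ∫ s in a..u, f' s) atTop (nhds (∫ s in Ioi a, f' s)) :=
      intervalIntegral_tendsto_integral_Ioi a (hf'int.mono_set Ioi_subset_Ici_self) tendsto_id
    have h2 : Tendsto (fun u => f a + ∫ s in a..u, f' s) atTop (nhds c) :=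
      tendsto_const_nhds.add h1
    refine h2.congr' ?_
    filter_upwards [eventually_ge_atTop a] with u hu
    rw [hFTC a u le_rfl hu]; ring
  -- tail formula
  have htail : ∀ t, a ≤ t → c - f t = ∫ s in Ioi t, f' s := by
    intro t ht
    have h1 : Tendsto (fun u => ∫ s in t..u, f' s) atTop (nhds (∫ s in Ioi t, f' s)) :=
      intervalIntegral_tendsto_integral_Ioi t
        (hf'int.mono_set (fun x hx => le_trans ht (le_of_lt hx))) tendsto_id
    have h2 : Tendsto (fun u => ∫ s in t..u, f' s) atTop (nhds (c - f t)) := by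
      refine ((hfc'.sub_const (f t)).congr' ?_)
      filter_upwards [eventually_ge_atTop t] with u hu
      rw [hFTC t u ht hu]
    exact (tendsto_nhds_unique h2 h1)
  -- the tail integral of |f'|^p exp(μ s)
  set A : ℝ → ℝ := fun t => ∫ s in Ioi t, |f' s| ^ p * Real.exp (μ * s) with hAdef
  have hAnn : ∀ t, 0 ≤ A t := fun t =>
    setIntegral_nonneg measurableSet_Ioi fun s _ =>
      mul_nonneg (Real.rpow_nonneg (abs_nonneg _) _) (Real.exp_pos _).le
  have hAtend : Tendsto A atTop (nhds 0) := by
    have h1 : Tendsto (fun t => ∫ s in a..t, |f' s| ^ p * Real.exp (μ * s)) atTop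
        (nhds (∫ s in Ioi a, |f' s| ^ p * Real.exp (μ * s))) :=
      intervalIntegral_tendsto_integral_Ioi a (hint.mono_set Ioi_subset_Ici_self) tendsto_id
    have h2 : Tendsto (fun t => (∫ s in Ioi a, |f' s| ^ p * Real.exp (μ * s)) -
        ∫ s in a..t, |f' s| ^ p * Real.exp (μ * s)) atTop (nhds 0) := by
      have h3 := (tendsto_const_nhds (x := ∫ s in Ioi a, |f' s| ^ p * Real.exp (μ * s))).sub h1
      simpa using h3
    refine h2.congr' ?_
    filter_upwards [eventually_ge_atTop a] with t ht
    have hsplit : (∫ s in Ioi a, |f' s| ^ p * Real.exp (μ * s)) =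
        (∫ s in Ioc a t, |f' s| ^ p * Real.exp (μ * s)) + A t := by
      rw [hAdef, ← setIntegral_union (Ioc_disjoint_Ioi le_rfl) measurableSet_Ioi
        (hint.mono_set (fun x hx => le_of_lt hx.1))
        (hint.mono_set (fun x hx => le_trans ht (le_of_lt hx))),
        Ioc_union_Ioi_eq_Ioi ht]
    rw [hsplit, intervalIntegral.integral_of_le ht]
    ring
  refine ⟨c, hfc', ?_⟩
  -- Hölder bound on the tail
  have hkey : ∀ t, a ≤ t →
      |f t - c| ^ p * Real.exp (μ * t) ≤ A t * (b ^ (p / q))⁻¹ := by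
    intro t ht
    -- step 1: |f t - c| ≤ ∫_{Ici t} |f'|
    have h8 : |f t - c| ≤ ∫ s in Ici t, |f' s| := by
      rw [abs_sub_comm, htail t ht]
      calc |∫ s in Ioi t, f' s| ≤ ∫ s in Ioi t, |f' s| := by
            simpa [Real.norm_eq_abs] using
              norm_integral_le_integral_norm (μ := volume.restrict (Ioi t)) f'
        _ = ∫ s in Ici t, |f' s| := setIntegral_congr_set Ioi_ae_eq_Ici
    -- step 2: Hölder
    have h9 : ∫ s in Ici t, |f' s| ≤
        (∫ s in Ici t, G s ^ p) ^ (1/p) * (∫ s in Ici t, H s ^ q) ^ (1/q) := by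
      have h := MeasureTheory.integral_mul_le_Lp_mul_Lq_of_nonneg hpq
        (ae_of_all _ fun s => hGnn s) (ae_of_all _ fun s => hHnn s)
        (hGmem t ht) (hHmem t)
      simpa only [hGH] using h
    have hGint_eq : (∫ s in Ici t, G s ^ p) = A t := by
      rw [hAdef, ← setIntegral_congr_set Ioi_ae_eq_Ici]
      exact setIntegral_congr_fun measurableSet_Ioi fun s _ => hGp s
    have hHint_eq : (∫ s in Ici t, H s ^ q) = Real.exp (-b * t) / b := by
      rw [← setIntegral_congr_set Ioi_ae_eq_Ici]
      have h1 : (∫ s in Ioi t, H s ^ q) = ∫ s in Ioi t, Real.exp (-b * s) :=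
        setIntegral_congr_fun measurableSet_Ioi fun s _ => hHq s
      rw [h1]
      have hder : ∀ x ∈ Ioi t, HasDerivAt (fun x => -Real.exp (-b * x) / b)
          (Real.exp (-b * x)) x := by
        intro x _
        simpa [hb.ne'] using ((hasDerivAt_id x).const_mul b).neg.exp.neg.div_const b
      have hlim : Tendsto (fun x => -Real.exp (-b * x) / b) atTop (nhds 0) := by
        have : Tendsto (fun x => -Real.exp (-b * x) / b) atTop (nhds (-0 / b)) := by
          refine Tendsto.div_const (Tendsto.neg ?_) _
          exact tendsto_exp_atBot.comp (tendsto_id.const_mul_atTop_of_neg (by linarith))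
        simpa using this
      have hcF : Continuous (fun x : ℝ => -Real.exp (-b * x) / b) :=
        ((Real.continuous_exp.comp (continuous_const.mul continuous_id)).neg).div_const b
      have := integral_Ioi_of_hasDerivAt_of_tendsto
        hcF.continuousWithinAt hder
        (exp_neg_integrableOn_Ioi t hb) hlim
      rw [this]
      field_simp
      ring
    have h10 : |f t - c| ≤ A t ^ (1/p) * (Real.exp (-b * t) / b) ^ (1/q) := by
      rw [← hGint_eq, ← hHint_eq]
      exact h8.trans h9
    have hDnn : (0:ℝ) ≤ Real.exp (-b * t) / b := div_nonneg (Real.exp_pos _).le hb.le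
    have h11 : |f t - c| ^ p ≤ A t * (Real.exp (-b * t) / b) ^ (p/q) := by
      have h := Real.rpow_le_rpow (abs_nonneg _) h10 hp0.le
      calc |f t - c| ^ p ≤ (A t ^ (1/p) * (Real.exp (-b * t) / b) ^ (1/q)) ^ p := h
        _ = A t * (Real.exp (-b * t) / b) ^ (p/q) := by
            rw [Real.mul_rpow (Real.rpow_nonneg (hAnn t) _) (Real.rpow_nonneg hDnn _),
              ← Real.rpow_mul (hAnn t), ← Real.rpow_mul hDnn,
              one_div_mul_cancel hp0.ne', Real.rpow_one]
            congr 2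
            ring
    have h12 : (Real.exp (-b * t) / b) ^ (p/q) * Real.exp (μ * t) = (b ^ (p/q))⁻¹ := by
      rw [Real.div_rpow (Real.exp_pos _).le hb.le, ← Real.exp_mul]
      have hbm : -b * t * (p / q) = -(μ * t) := by
        rw [hbdef]
        field_simp
      rw [hbm, div_mul_eq_mul_div, ← Real.exp_add, neg_add_cancel, Real.exp_zero, one_div]
    calc |f t - c| ^ p * Real.exp (μ * t)
        ≤ (A t * (Real.exp (-b * t) / b) ^ (p/q)) * Real.exp (μ * t) := by
          exact mul_le_mul_of_nonneg_right h11 (Real.exp_pos _).le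
      _ = A t * ((Real.exp (-b * t) / b) ^ (p/q) * Real.exp (μ * t)) := by ring
      _ = A t * (b ^ (p/q))⁻¹ := by rw [h12]
  -- squeeze
  have hlim : Tendsto (fun t => A t * (b ^ (p/q))⁻¹) atTop (nhds 0) := by
    have := hAtend.mul_const (b ^ (p/q))⁻¹
    simpa using this
  refine tendsto_of_tendsto_of_tendsto_of_le_of_le' tendsto_const_nhds hlim ?_ ?_
  · filter_upwards with t
    exact mul_nonneg (Real.rpow_nonneg (abs_nonneg _) _) (Real.exp_pos _).le
  · filter_upwards [eventually_ge_atTop a] with t ht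
    exact hkey t ht
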